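/- Let m ≥ 1 and let p : Fin (m+1) → ℝ^m be an affinely independent family of points. For any point x ∈ ℝ^m, if x does NOT lie in the convex hull of {p_0, …, p_m}, then the sum over j of the volumes of the sub-simplices obtained by replacing p_j with x is strictly greater than the volume of the simplex: ∑_{j=0}^{m} A(Function.update p j x) > A(p). -/

import Mathlib

open MeasureTheory

/-- The `m`-dimensional volume of the convex hull of the range of a family of points
in `ℝ^m` (the "area" `A(p)` of the simplex with vertices `p`). -/
noncomputable def simVol {m : ℕ} (p : Fin (m + 1) → EuclideanSpace ℝ (Fin m)) : ℝ :=
  (volume (convexHull ℝ (Set.range p))).toReal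

lemma simVol_update_aux {m : ℕ} (b : AffineBasis (Fin (m + 1)) ℝ (EuclideanSpace ℝ (Fin m)))
    (x : EuclideanSpace ℝ (Fin m)) (j : Fin (m + 1)) :
    volume (convexHull ℝ (Set.range (Function.update (⇑b) j x)))
      = ENNReal.ofReal |b.coord j x| * volume (convexHull ℝ (Set.range ⇑b)) := by
  classical
  set q : Fin (m + 1) → EuclideanSpace ℝ (Fin m) := Function.update (⇑b) j x with hq
  set T : EuclideanSpace ℝ (Fin m) →ᵃ[ℝ] EuclideanSpace ℝ (Fin m) :=
    (Finset.univ.affineCombination ℝ q).comp (AffineMap.pi fun i => b.coord i) with hT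
  have hTb : ∀ i, T (b i) = q i := by
    intro i
    show Finset.univ.affineCombination ℝ q ((AffineMap.pi fun k => b.coord k) (b i)) = q i
    refine Finset.univ.affineCombination_of_eq_one_of_eq_zero _ _ (Finset.mem_univ i) ?_ ?_
    · exact b.coord_apply_eq i
    · intro k _ hk
      exact b.coord_apply_ne hk
  -- determinant of the linear part
  have hdet : LinearMap.det T.linear = b.coord j x := by
    set B := b.basisOf j with hB
    set c : {i : Fin (m + 1) // i ≠ j} → ℝ := fun i => b.coord i x with hc
    have hw : ∑ i, b.coord i x = 1 := b.sum_coord_apply_eq_one x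
    have hxc : ∑ i, b.coord i x • b i = x := b.linear_combination_coord_eq_self x
    have hx' : x - b j = ∑ i : {i : Fin (m + 1) // i ≠ j}, c i • B i := by
      have h1 : x - b j = ∑ i, b.coord i x • (b i - b j) := by
        simp only [smul_sub, Finset.sum_sub_distrib, hxc, ← Finset.sum_smul, hw, one_smul]
      have hz : (fun i => b.coord i x • (b i - b j)) j = 0 := by simp
      have h2 : ∑ i ∈ Finset.univ.erase j, b.coord i x • (b i - b j)
          = ∑ i : {i : Fin (m + 1) // i ≠ j}, c i • B i := by
        rw [Finset.sum_subtype (p := fun i => i ≠ j) (Finset.univ.erase j)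
          (by intro k; simp [Finset.mem_erase]) (fun i => b.coord i x • (b i - b j))]
        refine Finset.sum_congr rfl fun i _ => ?_
        rw [hB, b.basisOf_apply, vsub_eq_sub]
      rw [h1, ← h2]
      exact (Finset.sum_erase (f := fun i => b.coord i x • (b i - b j)) Finset.univ (by simp)).symm
    have hlin : ∀ i : {i : Fin (m + 1) // i ≠ j},
        T.linear (B i) = B i - ∑ k : {i : Fin (m + 1) // i ≠ j}, c k • B k := by
      intro i
      have h2 : T.linear (B i) = b i - x := by
        rw [hB, b.basisOf_apply]
        rw [T.linearMap_vsub, hTb, hTb]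
        have hqi : q i = b i := by
          simp only [hq]
          rw [Function.update_of_ne i.2]
        have hqj : q j = x := by simp [hq]
        rw [hqi, hqj, vsub_eq_sub]
      rw [h2, ← hx', hB, b.basisOf_apply, vsub_eq_sub]
      abel
    have hmat : LinearMap.toMatrix B B T.linear
        = 1 + Matrix.replicateCol Unit (fun k => -c k) * Matrix.replicateRow Unit (fun _ => (1 : ℝ)) := by
      ext k i
      rw [LinearMap.toMatrix_apply, hlin]
      have hrs : ⇑(B.repr (∑ k : {i : Fin (m + 1) // i ≠ j}, c k • B k)) = c :=
        B.repr_sum_self c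
      rw [map_sub, Finsupp.sub_apply, B.repr_self_apply]
      have : (B.repr (∑ k : {i : Fin (m + 1) // i ≠ j}, c k • B k)) k = c k := by
        rw [hrs]
      rw [this]
      simp only [Matrix.add_apply, Matrix.one_apply, Matrix.mul_apply, Matrix.replicateCol_apply,
        Matrix.replicateRow_apply, Finset.univ_unique, Finset.sum_singleton]
      rcases eq_or_ne i k with h | h
      · subst h; simp [sub_eq_add_neg]
      · rw [if_neg h, if_neg (Ne.symm h)]; ring
    rw [← LinearMap.det_toMatrix B, hmat, Matrix.det_one_add_replicateCol_mul_replicateRow]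
    have hsum : ∑ k : {i : Fin (m + 1) // i ≠ j}, c k = 1 - b.coord j x := by
      rw [hc, ← Finset.sum_subtype (p := fun i => i ≠ j) (Finset.univ.erase j)
        (by intro k; simp [Finset.mem_erase]) (fun i => b.coord i x)]
      have := Finset.sum_erase_add Finset.univ (fun i => b.coord i x) (Finset.mem_univ j)
      rw [hw] at this
      linarith
    simp only [dotProduct, Finset.univ_unique, Finset.sum_singleton, one_mul]
    simp only [Finset.sum_neg_distrib, hsum]
    ring
  -- image of the convex hull
  have himg : convexHull ℝ (Set.range q) = T '' convexHull ℝ (Set.range ⇑b) := by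
    rw [AffineMap.image_convexHull, ← Set.range_comp]
    congr 1
    exact congrArg _ (funext hTb).symm
  -- volume of the image of a set under an affine map
  have hfun : ∀ z : EuclideanSpace ℝ (Fin m), T z = T 0 + T.linear z := by
    intro z
    have := T.map_vadd 0 z
    simpa [vadd_eq_add, add_comm] using this
  have hvol : volume (T '' convexHull ℝ (Set.range ⇑b))
      = ENNReal.ofReal |LinearMap.det T.linear| * volume (convexHull ℝ (Set.range ⇑b)) := by
    have hco : ⇑T = (fun y => T 0 +ᵥ y) ∘ ⇑T.linear := funext fun z => by
      simp [hfun z, vadd_eq_add]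
    rw [hco, Set.image_comp, Set.image_vadd, measure_vadd,
      Measure.addHaar_image_linearMap]
  rw [himg, hvol, hdet]

/-- Strict convex-hull inclusion test (Eq. (13)): if `x` does not lie in the convex
hull of the affinely independent family `p`, then the sum of the sub-simplex volumes
obtained by replacing each vertex with `x` strictly exceeds the simplex volume. -/
theorem convexHull_exclusion_test {m : ℕ} (hm : 1 ≤ m)
    (p : Fin (m + 1) → EuclideanSpace ℝ (Fin m)) (hp : AffineIndependent ℝ p)
    (x : EuclideanSpace ℝ (Fin m)) (hx : x ∉ convexHull ℝ (Set.range p)) :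
    ∑ j : Fin (m + 1), simVol (Function.update p j x) > simVol p := by
  classical
  have htop : affineSpan ℝ (Set.range p) = ⊤ := by
    rw [hp.affineSpan_eq_top_iff_card_eq_finrank_add_one]
    simp [finrank_euclideanSpace_fin]
  let b : AffineBasis (Fin (m + 1)) ℝ (EuclideanSpace ℝ (Fin m)) := ⟨p, hp, htop⟩
  have hb : ⇑b = p := rfl
  have hVlt : volume (convexHull ℝ (Set.range p)) < ⊤ :=
    ((Set.finite_range p).isCompact_convexHull ℝ).measure_lt_top
  have hVpos : 0 < volume (convexHull ℝ (Set.range p)) := by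
    apply MeasureTheory.Measure.measure_pos_of_nonempty_interior
    rw [← hb]
    exact ⟨_, b.centroid_mem_interior_convexHull⟩
  have hpos : 0 < simVol p := ENNReal.toReal_pos hVpos.ne' hVlt.ne
  have hw1 : ∑ i, b.coord i x = 1 := b.sum_coord_apply_eq_one x
  have hneg : ∃ i, b.coord i x < 0 := by
    by_contra h
    push_neg at h
    apply hx
    rw [← hb, AffineBasis.convexHull_eq_nonneg_coord]
    exact h
  have habs : 1 < ∑ i, |b.coord i x| := by
    obtain ⟨i0, hi0⟩ := hneg
    have h1 : ∑ i, b.coord i x < ∑ i, |b.coord i x| := by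
      refine Finset.sum_lt_sum (fun i _ => le_abs_self _)
        ⟨i0, Finset.mem_univ _, ?_⟩
      calc b.coord i0 x < 0 := hi0
        _ ≤ |b.coord i0 x| := abs_nonneg _
    linarith
  have hupdate : ∀ j, simVol (Function.update p j x) = |b.coord j x| * simVol p := by
    intro j
    unfold simVol
    rw [← hb, simVol_update_aux b x j, ENNReal.toReal_mul,
      ENNReal.toReal_ofReal (abs_nonneg _)]
  calc simVol p = 1 * simVol p := (one_mul _).symm
    _ < (∑ i, |b.coord i x|) * simVol p := by
        exact mul_lt_mul_of_pos_right habs hpos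
    _ = ∑ j : Fin (m + 1), simVol (Function.update p j x) := by
        rw [Finset.sum_mul]
        exact Finset.sum_congr rfl fun j _ => (hupdate j).symm
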